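/- arXiv:1308.1551 — 3 statements merged into one kernel-verified Lean document; each statement's English description precedes it below -/
import Mathlib

section
/- Let δ : X₂ → X₁ be an injective A-linear map of finite-dimensional A-modules, π : X₁ → coker(δ) the canonical projection, f₂ : X₂ → E₂ an injective A-linear map into an injective A-module E₂, η : coker(δ) → K an injective A-linear map into an injective A-module K, and s : X₁ → E₂ any A-linear map satisfying s∘δ = f₂. Then the map f₁ := (s, η∘π) : X₁ → E₂ ⊕ K is injective, it satisfies f₁∘δ = (f₂, 0) : X₂ → E₂ ⊕ K (i.e. the square formed by δ, the inclusion E₂ → E₂⊕K into the first summand, f₂ and f₁ commutes), and the induced map coker(f₂) → coker(f₁) on cokernels is injective. -/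
/-- Key construction for the quiver `2 → 1`: given monic `δ : X₂ → X₁`, an embedding
`f₂ : X₂ → E₂` into an injective, an embedding `η : coker δ → K` into an injective, and
`s : X₁ → E₂` with `s ∘ δ = f₂`, the map `f₁ = (s, η ∘ π) : X₁ → E₂ ⊕ K` is injective,
satisfies `f₁ ∘ δ = (f₂, 0)`, and the induced map on cokernels is injective. -/
theorem quiver_two_to_one_construction
    (k : Type) (A : Type) [Field k] [Ring A] [Algebra k A] [FiniteDimensional k A]
    (X₂ X₁ E₂ K : Type)
    [AddCommGroup X₂] [Module A X₂] [AddCommGroup X₁] [Module A X₁]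
    [AddCommGroup E₂] [Module A E₂] [AddCommGroup K] [Module A K]
    [Module.Finite A X₂] [Module.Finite A X₁] [Module.Finite A E₂] [Module.Finite A K]
    (δ : X₂ →ₗ[A] X₁) (hδ : Function.Injective δ)
    (f₂ : X₂ →ₗ[A] E₂) (hf₂ : Function.Injective f₂) (hE₂ : Module.Injective A E₂)
    (η : (X₁ ⧸ LinearMap.range δ) →ₗ[A] K) (hη : Function.Injective η)
    (hK : Module.Injective A K)
    (s : X₁ →ₗ[A] E₂) (hs : s ∘ₗ δ = f₂) :
    ∀ f₁ : X₁ →ₗ[A] E₂ × K,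
      f₁ = LinearMap.prod s (η ∘ₗ (LinearMap.range δ).mkQ) →
      Function.Injective f₁ ∧
      f₁ ∘ₗ δ = LinearMap.inl A E₂ K ∘ₗ f₂ ∧
      ∃ g : (E₂ ⧸ LinearMap.range f₂) →ₗ[A] ((E₂ × K) ⧸ LinearMap.range f₁),
        g ∘ₗ (LinearMap.range f₂).mkQ =
          (LinearMap.range f₁).mkQ ∘ₗ LinearMap.inl A E₂ K ∧
        Function.Injective g := by
  intro f₁ hf₁
  subst hf₁
  have hsδ : ∀ x, s (δ x) = f₂ x := fun x => congrFun (congrArg DFunLike.coe hs) x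
  have hπδ : ∀ x, (LinearMap.range δ).mkQ (δ x) = 0 := fun x =>
    (Submodule.Quotient.mk_eq_zero _).2 ⟨x, rfl⟩
  set π := (LinearMap.range δ).mkQ with hπ
  set f₁ := LinearMap.prod s (η ∘ₗ π) with hf₁def
  have hf₁app : ∀ x, f₁ x = (s x, η (π x)) := fun x => rfl
  -- key: (e, 0) ∈ range f₁ → e ∈ range f₂
  have key : ∀ e : E₂, ((e, 0) : E₂ × K) ∈ LinearMap.range f₁ → e ∈ LinearMap.range f₂ := by
    rintro e ⟨x, hx⟩
    rw [hf₁app] at hx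
    have h2 : η (π x) = 0 := congrArg Prod.snd hx
    have h3 : π x = 0 := by
      have := hη (h2.trans (map_zero η).symm)
      simpa using this
    obtain ⟨y, hy⟩ := (Submodule.Quotient.mk_eq_zero _).1 h3
    refine ⟨y, ?_⟩
    have h4 : s x = e := congrArg Prod.fst hx
    rw [← hsδ y, hy, h4]
  have hinj : Function.Injective f₁ := by
    intro x y hxy
    rw [hf₁app, hf₁app] at hxy
    have h1 : s x = s y := congrArg Prod.fst hxy
    have h2 : π x = π y := hη (congrArg Prod.snd hxy)
    have h3 : π (x - y) = 0 := by rw [map_sub, h2, sub_self]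
    obtain ⟨z, hz⟩ := (Submodule.Quotient.mk_eq_zero _).1 h3
    have h4 : f₂ z = 0 := by
      rw [← hsδ z, hz, map_sub, h1, sub_self]
    have h5 : z = 0 := hf₂ (h4.trans (map_zero f₂).symm)
    have : x - y = 0 := by rw [← hz, h5, map_zero]
    exact sub_eq_zero.1 this
  have hcomm : f₁ ∘ₗ δ = LinearMap.inl A E₂ K ∘ₗ f₂ := by
    ext x
    · simp [hf₁app, hsδ]
    · simp [hf₁app, hπδ]
  refine ⟨hinj, hcomm, ?_⟩
  have hle : LinearMap.range f₂ ≤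
      LinearMap.ker ((LinearMap.range f₁).mkQ ∘ₗ LinearMap.inl A E₂ K) := by
    rintro _ ⟨x, rfl⟩
    simp only [LinearMap.mem_ker, LinearMap.comp_apply, LinearMap.inl_apply]
    rw [Submodule.mkQ_apply, Submodule.Quotient.mk_eq_zero]
    exact ⟨δ x, by rw [hf₁app, hsδ, hπδ, map_zero]⟩
  refine ⟨Submodule.liftQ _ _ hle, Submodule.liftQ_mkQ _ _ hle, ?_⟩
  intro a b hab
  obtain ⟨e, rfl⟩ := Submodule.Quotient.mk_surjective _ a
  obtain ⟨e', rfl⟩ := Submodule.Quotient.mk_surjective _ b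
  rw [Submodule.Quotient.eq]
  have hab' : Submodule.Quotient.mk ((e, 0) : E₂ × K) =
      (Submodule.Quotient.mk ((e', 0) : E₂ × K) :
        (E₂ × K) ⧸ LinearMap.range f₁) := hab
  have : ((e, 0) - (e', 0) : E₂ × K) ∈ LinearMap.range f₁ :=
    (Submodule.Quotient.eq _).1 hab'
  have h0 : ((e - e', 0) : E₂ × K) ∈ LinearMap.range f₁ := by
    simpa [Prod.ext_iff] using this
  exact key _ h0
end

section
/- Let α : X₂ → X₁ and β : X₃ → X₁ be A-linear maps of finite-dimensional A-modules such that (α, β) : X₂ ⊕ X₃ → X₁ is injective, and let π : X₁ → C := coker(α, β) be the canonical projection. Let f₂ : X₂ → E₂ and f₃ : X₃ → E₃ be injective A-linear maps into injective A-modules, η : C → K an injective A-linear map into an injective A-module K, and s₂ : X₁ → E₂, s₃ : X₁ → E₃ A-linear maps satisfying s₂∘α = f₂, s₂∘β = 0, s₃∘α = 0, s₃∘β = f₃. Then f₁ := (s₂, s₃, η∘π) : X₁ → E₂ ⊕ E₃ ⊕ K is injective, and the induced map coker(f₂) ⊕ coker(f₃) → coker(f₁) on cokernels is injective. -/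
/-- Key construction for the quiver `2 → 1 ← 3`: given `(α, β) : X₂ ⊕ X₃ → X₁` injective,
embeddings `f₂, f₃, η` into injectives, and `s₂, s₃` with `s₂∘α = f₂`, `s₂∘β = 0`,
`s₃∘α = 0`, `s₃∘β = f₃`, the map `f₁ = (s₂, s₃, η∘π) : X₁ → E₂ ⊕ E₃ ⊕ K` is injective and
the induced map `coker f₂ ⊕ coker f₃ → coker f₁` is injective. -/
theorem quiver_two_one_three_construction
    (k : Type) (A : Type) [Field k] [Ring A] [Algebra k A] [FiniteDimensional k A]
    (X₂ X₃ X₁ E₂ E₃ K : Type)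
    [AddCommGroup X₂] [Module A X₂] [AddCommGroup X₃] [Module A X₃]
    [AddCommGroup X₁] [Module A X₁] [AddCommGroup E₂] [Module A E₂]
    [AddCommGroup E₃] [Module A E₃] [AddCommGroup K] [Module A K]
    [Module.Finite A X₂] [Module.Finite A X₃] [Module.Finite A X₁]
    [Module.Finite A E₂] [Module.Finite A E₃] [Module.Finite A K]
    (α : X₂ →ₗ[A] X₁) (β : X₃ →ₗ[A] X₁)
    (hαβ : Function.Injective (LinearMap.coprod α β))
    (f₂ : X₂ →ₗ[A] E₂) (hf₂ : Function.Injective f₂) (hE₂ : Module.Injective A E₂)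
    (f₃ : X₃ →ₗ[A] E₃) (hf₃ : Function.Injective f₃) (hE₃ : Module.Injective A E₃)
    (η : (X₁ ⧸ LinearMap.range (LinearMap.coprod α β)) →ₗ[A] K)
    (hη : Function.Injective η) (hK : Module.Injective A K)
    (s₂ : X₁ →ₗ[A] E₂) (s₃ : X₁ →ₗ[A] E₃)
    (hs₂α : s₂ ∘ₗ α = f₂) (hs₂β : s₂ ∘ₗ β = 0)
    (hs₃α : s₃ ∘ₗ α = 0) (hs₃β : s₃ ∘ₗ β = f₃) :
    ∀ f₁ : X₁ →ₗ[A] E₂ × E₃ × K,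
      f₁ = LinearMap.prod s₂ (LinearMap.prod s₃
            (η ∘ₗ (LinearMap.range (LinearMap.coprod α β)).mkQ)) →
      Function.Injective f₁ ∧
      ∃ g : ((E₂ ⧸ LinearMap.range f₂) × (E₃ ⧸ LinearMap.range f₃)) →ₗ[A]
          ((E₂ × E₃ × K) ⧸ LinearMap.range f₁),
        g ∘ₗ LinearMap.prodMap (LinearMap.range f₂).mkQ (LinearMap.range f₃).mkQ =
          (LinearMap.range f₁).mkQ ∘ₗ
            LinearMap.prodMap LinearMap.id (LinearMap.inl A E₃ K) ∧
        Function.Injective g := by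
  intro f₁ hf₁
  have hf₁app : ∀ x, f₁ x =
      (s₂ x, s₃ x, η ((LinearMap.range (LinearMap.coprod α β)).mkQ x)) := by
    intro x; rw [hf₁]; rfl
  have hs₂α' : ∀ a, s₂ (α a) = f₂ a := fun a => LinearMap.congr_fun hs₂α a
  have hs₂β' : ∀ b, s₂ (β b) = 0 := fun b => LinearMap.congr_fun hs₂β b
  have hs₃α' : ∀ a, s₃ (α a) = 0 := fun a => LinearMap.congr_fun hs₃α a
  have hs₃β' : ∀ b, s₃ (β b) = f₃ b := fun b => LinearMap.congr_fun hs₃β b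
  have hmem : ∀ x : X₁, (LinearMap.range (LinearMap.coprod α β)).mkQ x = 0 →
      ∃ a b, x = α a + β b := by
    intro x hx
    rw [Submodule.mkQ_apply, Submodule.Quotient.mk_eq_zero] at hx
    obtain ⟨⟨a, b⟩, hab⟩ := hx
    exact ⟨a, b, by rw [← hab]; rfl⟩
  have hπα : ∀ a : X₂, (LinearMap.range (LinearMap.coprod α β)).mkQ (α a) = 0 := by
    intro a
    rw [Submodule.mkQ_apply, Submodule.Quotient.mk_eq_zero]
    exact ⟨(a, 0), by simp⟩
  have hπβ : ∀ b : X₃, (LinearMap.range (LinearMap.coprod α β)).mkQ (β b) = 0 := by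
    intro b
    rw [Submodule.mkQ_apply, Submodule.Quotient.mk_eq_zero]
    exact ⟨(0, b), by simp⟩
  constructor
  · rw [← LinearMap.ker_eq_bot, Submodule.eq_bot_iff]
    intro x hx
    rw [LinearMap.mem_ker, hf₁app] at hx
    obtain ⟨h2, h3, hk⟩ : s₂ x = 0 ∧ s₃ x = 0 ∧
        η ((LinearMap.range (LinearMap.coprod α β)).mkQ x) = 0 := by
      simpa [Prod.ext_iff] using hx
    have hx0 : (LinearMap.range (LinearMap.coprod α β)).mkQ x = 0 :=
      hη (hk.trans (map_zero η).symm)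
    obtain ⟨a, b, rfl⟩ := hmem x hx0
    have ha : a = 0 := hf₂ (by
      rw [← hs₂α' a, map_zero]
      rw [map_add, hs₂α', hs₂β', add_zero] at h2
      rw [hs₂α', h2])
    have hb : b = 0 := hf₃ (by
      rw [← hs₃β' b, map_zero]
      rw [map_add, hs₃α', hs₃β', zero_add] at h3
      rw [hs₃β', h3])
    rw [ha, hb]; simp
  · set q := (LinearMap.range f₁).mkQ with hq
    have h₂ : LinearMap.range f₂ ≤
        LinearMap.ker (q ∘ₗ LinearMap.inl A E₂ (E₃ × K)) := by
      rintro _ ⟨a, rfl⟩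
      rw [LinearMap.mem_ker]
      simp only [LinearMap.comp_apply, LinearMap.inl_apply]
      rw [hq, Submodule.mkQ_apply, Submodule.Quotient.mk_eq_zero]
      refine ⟨α a, ?_⟩
      rw [hf₁app, hπα, hs₂α', hs₃α', map_zero]
      rfl
    have h₃ : LinearMap.range f₃ ≤
        LinearMap.ker (q ∘ₗ (LinearMap.inr A E₂ (E₃ × K) ∘ₗ LinearMap.inl A E₃ K)) := by
      rintro _ ⟨b, rfl⟩
      rw [LinearMap.mem_ker]
      simp only [LinearMap.comp_apply, LinearMap.inl_apply, LinearMap.inr_apply]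
      rw [hq, Submodule.mkQ_apply, Submodule.Quotient.mk_eq_zero]
      refine ⟨β b, ?_⟩
      rw [hf₁app, hπβ, hs₂β', hs₃β', map_zero]
    refine ⟨LinearMap.coprod ((LinearMap.range f₂).liftQ _ h₂)
      ((LinearMap.range f₃).liftQ _ h₃), ?_, ?_⟩
    · refine LinearMap.ext fun x => ?_
      obtain ⟨e₂, e₃⟩ := x
      simp only [LinearMap.comp_apply, LinearMap.prodMap_apply, LinearMap.coprod_apply,
        Submodule.mkQ_apply, Submodule.liftQ_apply, LinearMap.inl_apply, LinearMap.inr_apply,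
        LinearMap.id_apply]
      rw [← map_add]
      congr 1
      simp
    · rw [← LinearMap.ker_eq_bot, Submodule.eq_bot_iff]
      rintro ⟨u, v⟩ hp
      obtain ⟨e₂, rfl⟩ := Submodule.mkQ_surjective _ u
      obtain ⟨e₃, rfl⟩ := Submodule.mkQ_surjective _ v
      rw [LinearMap.mem_ker] at hp
      simp only [LinearMap.coprod_apply, Submodule.mkQ_apply, Submodule.liftQ_apply,
        LinearMap.comp_apply, LinearMap.inl_apply, LinearMap.inr_apply] at hp
      rw [← map_add] at hp
      have hp' : ((e₂ : E₂), ((e₃ : E₃), (0 : K))) ∈ LinearMap.range f₁ := by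
        have := hp
        rw [hq, Submodule.mkQ_apply, Submodule.Quotient.mk_eq_zero] at this
        simpa [Prod.ext_iff] using this
      obtain ⟨x, hx⟩ := hp'
      rw [hf₁app] at hx
      obtain ⟨h2, h3, hk⟩ : s₂ x = e₂ ∧ s₃ x = e₃ ∧
          η ((LinearMap.range (LinearMap.coprod α β)).mkQ x) = 0 := by
        simpa [Prod.ext_iff] using hx
      have hx0 : (LinearMap.range (LinearMap.coprod α β)).mkQ x = 0 :=
        hη (hk.trans (map_zero η).symm)
      obtain ⟨a, b, rfl⟩ := hmem x hx0
      have he₂ : e₂ ∈ LinearMap.range f₂ := ⟨a, by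
        rw [← h2, map_add, hs₂α', hs₂β', add_zero]⟩
      have he₃ : e₃ ∈ LinearMap.range f₃ := ⟨b, by
        rw [← h3, map_add, hs₃α', hs₃β', zero_add]⟩
      exact Prod.ext (by simpa [Submodule.Quotient.mk_eq_zero] using he₂)
        (by simpa [Submodule.Quotient.mk_eq_zero] using he₃)
end

section
/- Mon(Q,A) is closed under extensions in Rep(Q,A): if 0 → X → Y → Z → 0 is an exact sequence in Rep(Q,A) (i.e. exact at every vertex) and X and Z are monic representations, then Y is a monic representation. -/
open CategoryTheory Limits

variable (A : Type) [Ring A]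
variable (V : Type) [Quiver.{0} V] [Fintype V] [∀ i j : V, Fintype (i ⟶ j)]
  [∀ i j : V, Fintype (Quiver.Path i j)]

/-- The category `Rep(Q,A)` of representations of the quiver `Q` over `A`. -/
abbrev QRep := Paths V ⥤ ModuleCat.{0} A

/-- The canonical map `δ_i(X) : ⊕_{α : e(α) = i} X_{s(α)} → X_i`. -/
noncomputable def deltaMap (X : QRep A V) (i : V) :
    (∀ a : (Σ j : V, j ⟶ i), X.obj ((Paths.of V).obj a.1)) →ₗ[A] X.obj ((Paths.of V).obj i) where
  toFun v := ∑ a : (Σ j : V, j ⟶ i), X.map a.2.toPath (v a)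
  map_add' u v := by
    refine (Finset.sum_congr rfl fun a _ => ?_).trans Finset.sum_add_distrib
    exact map_add _ (u a) (v a)
  map_smul' c v := by
    rw [RingHom.id_apply]
    refine (Finset.sum_congr rfl fun a _ => ?_).trans Finset.smul_sum.symm
    exact map_smul _ c (v a)

/-- A representation is monic if each `δ_i(X)` is injective. -/
def IsMonicRep (X : QRep A V) : Prop :=
  ∀ i : V, Function.Injective (deltaMap A V X i)

/-- A representation is finite-dimensional if each branch is a finite `A`-module. -/
def IsFinRep (X : QRep A V) : Prop :=
  ∀ i : V, Module.Finite A (X.obj ((Paths.of V).obj i))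

/-- The monomorphism category `Mon(Q,A)`: finite-dimensional monic representations. -/
abbrev MonRep := ObjectProperty.FullSubcategory (fun X : QRep A V => IsMonicRep A V X ∧ IsFinRep A V X)

/-- `m_i(M) = P(i) ⊗_k M`. -/
noncomputable def mObj (i : V) (M : ModuleCat.{0} A) : QRep A V where
  obj j := ModuleCat.of A (((Paths.of V).obj i ⟶ j) →₀ M)
  map {j l} q := ModuleCat.ofHom (Finsupp.lmapDomain M A (fun p => p ≫ q))
  map_id j := by
    have h : (fun p : (Paths.of V).obj i ⟶ j => p ≫ 𝟙 j) = id := by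
      funext p; simp
    apply ModuleCat.hom_ext
    show Finsupp.lmapDomain (↑M) A (fun p : (Paths.of V).obj i ⟶ j => p ≫ 𝟙 j) = _
    rw [h, Finsupp.lmapDomain_id]; rfl
  map_comp {j l r} q q' := by
    have h : (fun p : (Paths.of V).obj i ⟶ j => p ≫ (q ≫ q'))
        = (fun p' : (Paths.of V).obj i ⟶ l => p' ≫ q') ∘ (fun p => p ≫ q) := by
      funext p; simp
    apply ModuleCat.hom_ext
    show Finsupp.lmapDomain (↑M) A (fun p : (Paths.of V).obj i ⟶ j => p ≫ (q ≫ q')) = _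
    rw [h, Finsupp.lmapDomain_comp]; rfl

/-- The functor `m_i : A-mod → Rep(Q,A)`, `M ↦ P(i) ⊗_k M`. -/
noncomputable def mFunctor (i : V) : ModuleCat.{0} A ⥤ QRep A V where
  obj M := mObj A V i M
  map {M N} φ :=
    { app := fun j => ModuleCat.ofHom (Finsupp.mapRange.linearMap (α := ((Paths.of V).obj i ⟶ j)) φ.hom)
      naturality := fun j l q => by
        apply ModuleCat.hom_ext
        apply Finsupp.lhom_ext
        intro p m
        show Finsupp.mapRange.linearMap φ.hom (Finsupp.mapDomain (fun p' => p' ≫ q) (Finsupp.single p m))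
          = Finsupp.mapDomain (fun p' => p' ≫ q) (Finsupp.mapRange.linearMap φ.hom (Finsupp.single p m))
        simp [Finsupp.mapDomain_single] }
  map_id M := by
    apply NatTrans.ext; funext j
    apply ModuleCat.hom_ext
    apply Finsupp.lhom_ext; intro p m
    show Finsupp.mapRange.linearMap (ModuleCat.Hom.hom (𝟙 M)) (Finsupp.single p m) = Finsupp.single p m
    simp [Finsupp.mapRange_single] <;> rfl
  map_comp {M N P} φ ψ := by
    apply NatTrans.ext; funext j
    apply ModuleCat.hom_ext
    apply Finsupp.lhom_ext; intro p m
    show Finsupp.mapRange.linearMap (φ ≫ ψ).hom (Finsupp.single p m)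
      = Finsupp.mapRange.linearMap ψ.hom (Finsupp.mapRange.linearMap φ.hom (Finsupp.single p m))
    simp [Finsupp.mapRange_single]

/-- The canonical morphism `m_i(X_i) ⟶ X`, given at each vertex `j` by the maps `X_p`
over paths `p : i → j`. -/
noncomputable def counitHom (i : V) (X : QRep A V) :
    mObj A V i (X.obj ((Paths.of V).obj i)) ⟶ X where
  app j := ModuleCat.ofHom (Finsupp.lsum ℕ (fun p : (Paths.of V).obj i ⟶ j => (X.map p).hom))
  naturality j l q := by
    apply ModuleCat.hom_ext
    apply Finsupp.lhom_ext
    intro p m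
    show Finsupp.lsum ℕ (fun p' : (Paths.of V).obj i ⟶ l => (X.map p').hom)
      (Finsupp.mapDomain (fun p' => p' ≫ q) (Finsupp.single p m)) = X.map q (Finsupp.lsum ℕ _ (Finsupp.single p m))
    simp [Finsupp.mapDomain_single, Finsupp.lsum_single]

/-- The cokernel of `δ_i(X)`, i.e. `Cok_i(X)`. -/
noncomputable def cokerObj (X : QRep A V) (i : V) : ModuleCat.{0} A :=
  ModuleCat.of A (X.obj ((Paths.of V).obj i) ⧸ LinearMap.range (deltaMap A V X i))

instance : HasFiniteBiproducts (QRep A V) := HasFiniteBiproducts.of_hasFiniteProducts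
instance : HasFiniteBiproducts (ModuleCat.{0} A) := HasFiniteBiproducts.of_hasFiniteProducts


/-- `Mon(Q,A)` is closed under extensions in `Rep(Q,A)`. -/
theorem monic_closed_under_extensions
    (k : Type) [Field k] [Algebra k A] [FiniteDimensional k A]
    (X Y Z : QRep A V)
    (hXfin : IsFinRep A V X) (hYfin : IsFinRep A V Y) (hZfin : IsFinRep A V Z)
    (f : X ⟶ Y) (g : Y ⟶ Z)
    (hmono : ∀ j : Paths V, Function.Injective (f.app j))
    (hexact : ∀ j : Paths V, Function.Exact (f.app j) (g.app j))
    (hepi : ∀ j : Paths V, Function.Surjective (g.app j))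
    (hX : IsMonicRep A V X) (hZ : IsMonicRep A V Z) :
    IsMonicRep A V Y := by
  intro i
  rw [injective_iff_map_eq_zero]
  intro v hv
  -- push forward to Z
  have hgw : (fun a : (Σ j : V, j ⟶ i) => g.app ((Paths.of V).obj a.1) (v a)) = 0 := by
    apply hZ i
    show deltaMap A V Z i _ = deltaMap A V Z i 0
    rw [map_zero]
    show ∑ a : (Σ j : V, j ⟶ i), Z.map a.2.toPath (g.app ((Paths.of V).obj a.1) (v a)) = 0
    have : ∀ a : (Σ j : V, j ⟶ i), Z.map a.2.toPath (g.app ((Paths.of V).obj a.1) (v a))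
        = g.app ((Paths.of V).obj i) (Y.map a.2.toPath (v a)) := by
      intro a
      exact congrFun (congrArg (fun (h : Y.obj ((Paths.of V).obj a.1) ⟶ Z.obj ((Paths.of V).obj i)) => (h : _ → _)) (g.naturality a.2.toPath)).symm (v a)
    rw [Finset.sum_congr rfl fun a _ => this a]
    have h3 : (g.app ((Paths.of V).obj i)) (∑ a : (Σ j : V, j ⟶ i), Y.map a.2.toPath (v a))
        = ∑ a : (Σ j : V, j ⟶ i), (g.app ((Paths.of V).obj i)) (Y.map a.2.toPath (v a)) :=
      map_sum _ _ _
    refine h3.symm.trans ?_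
    have h2 : (∑ a : (Σ j : V, j ⟶ i), Y.map a.2.toPath (v a)) = deltaMap A V Y i v := rfl
    exact (congrArg _ (h2.trans hv)).trans (map_zero _)
  -- lift to X
  have hlift : ∀ a : (Σ j : V, j ⟶ i), ∃ u, f.app ((Paths.of V).obj a.1) u = v a := by
    intro a
    have : g.app ((Paths.of V).obj a.1) (v a) = 0 := congrFun hgw a
    exact (hexact ((Paths.of V).obj a.1) (v a)).mp this
  choose u hu using hlift
  have hdX : deltaMap A V X i u = 0 := by
    apply hmono ((Paths.of V).obj i)
    rw [map_zero]
    show f.app ((Paths.of V).obj i) (∑ a : (Σ j : V, j ⟶ i), X.map a.2.toPath (u a)) = 0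
    refine (map_sum _ _ _).trans ?_
    have : ∀ a : (Σ j : V, j ⟶ i), f.app ((Paths.of V).obj i) (X.map a.2.toPath (u a))
        = Y.map a.2.toPath (v a) := by
      intro a
      rw [← hu a]
      exact congrFun (congrArg (fun (h : X.obj ((Paths.of V).obj a.1) ⟶ Y.obj ((Paths.of V).obj i)) => (h : _ → _)) (f.naturality a.2.toPath)) (u a)
    rw [Finset.sum_congr rfl fun a _ => this a]
    exact hv
  have hu0 : u = 0 := by
    apply hX i
    rw [hdX, map_zero]
  funext a
  rw [← hu a, hu0]
  simp
end
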